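/- Fix 𝔟 ∈ (0,1/2) and an integer N ≥ 2. For every finite signed Borel measure σ on ℝ with ∬ ln(1 + sin²(2π𝔟)/sinh²(τ_N(s−u))) d|σ|(s)d|σ|(u) < ∞, one has E_N^{(−)}[σ] ≥ 0. -/

import Mathlib

open MeasureTheory Filter
open scoped ENNReal

noncomputable section

/-- The double integral ∬ f(s−u) dμ(s)dν(u) against two signed measures, expanded through
their Jordan decompositions. -/
def jordanDbl (f : ℝ → ℝ) (μ ν : SignedMeasure ℝ) : ℝ :=
  (∫ q : ℝ × ℝ, f (q.1 - q.2)
      ∂(μ.toJordanDecomposition.posPart.prod ν.toJordanDecomposition.posPart))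
  - (∫ q : ℝ × ℝ, f (q.1 - q.2)
      ∂(μ.toJordanDecomposition.posPart.prod ν.toJordanDecomposition.negPart))
  - (∫ q : ℝ × ℝ, f (q.1 - q.2)
      ∂(μ.toJordanDecomposition.negPart.prod ν.toJordanDecomposition.posPart))
  + (∫ q : ℝ × ℝ, f (q.1 - q.2)
      ∂(μ.toJordanDecomposition.negPart.prod ν.toJordanDecomposition.negPart))

/-- ln(1 + sin²(2π𝔟)/sinh²(τ·x)). -/
def vln (b τ x : ℝ) : ℝ :=
  Real.log (1 + Real.sin (2 * Real.pi * b) ^ 2 / Real.sinh (τ * x) ^ 2)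

/-- The functional E_N^{(−)}[σ] on signed measures. -/
def ENminus (b : ℝ) (N : ℕ) (σ : SignedMeasure ℝ) : ℝ :=
  (1 / 4) * jordanDbl (fun x => vln b (Real.log N) x) σ σ


open Set Topology
open scoped NNReal

namespace Stmt9


def acoef (b : ℝ) (n : ℕ) : ℝ := 2 * (1 - Real.cos (2 * (2 * Real.pi * b) * n)) / n

lemma acoef_nonneg (b : ℝ) (n : ℕ) : 0 ≤ acoef b n := by
  unfold acoef
  apply div_nonneg _ (Nat.cast_nonneg n)
  nlinarith [Real.cos_le_one (2 * (2 * Real.pi * b) * n)]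


lemma hasSum_vln (b τ : ℝ) (hτ : 0 < τ) {x : ℝ} (hx : x ≠ 0) :
    HasSum (fun n : ℕ => acoef b n * Real.exp (-(2 * τ * n * |x|))) (vln b τ x) := by
  have hy : 0 < τ * |x| := mul_pos hτ (abs_pos.mpr hx)
  set y := τ * |x| with hy_def
  set θ := 2 * Real.pi * b with hθ
  set r := Real.exp (-(2 * y)) with hr
  have hr0 : 0 < r := Real.exp_pos _
  have hr1 : r < 1 := by
    rw [hr, Real.exp_lt_one_iff]; linarith
  set z : ℂ := (r : ℂ) * Complex.exp ((2 * θ : ℝ) * Complex.I) with hz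
  have hznorm : ‖z‖ = r := by
    rw [hz, norm_mul,
      Complex.norm_exp_ofReal_mul_I, Complex.norm_real, Real.norm_eq_abs, abs_of_pos hr0, mul_one]
  have hz1 : ‖z‖ < 1 := by rwa [hznorm]
  -- complex series
  have hC := Complex.hasSum_taylorSeries_neg_log hz1
  have hzn : ∀ n : ℕ, z ^ n / (n : ℂ) = ((r ^ n / n : ℝ) : ℂ) * Complex.exp ((2 * θ * n : ℝ) * Complex.I) := by
    intro n
    rw [hz, mul_pow, ← Complex.exp_nat_mul]
    push_cast
    ring
  have h1 : HasSum (fun n : ℕ => r ^ n * Real.cos (2 * θ * n) / n)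
      (-Real.log ‖1 - z‖) := by
    have := Complex.reCLM.hasSum hC
    simp only [Complex.reCLM_apply] at this
    convert this using 2 with n
    · rw [hzn n, Complex.re_ofReal_mul, Complex.exp_ofReal_mul_I_re]
      ring
    · rw [Complex.neg_re, Complex.log_re]
  -- real series
  have h2 : HasSum (fun n : ℕ => r ^ n / n) (-Real.log (1 - r)) := by
    have hz1' : ‖((r : ℝ) : ℂ)‖ < 1 := by
      rw [Complex.norm_real, Real.norm_eq_abs, abs_of_pos hr0]; exact hr1
    have h := Complex.reCLM.hasSum (Complex.hasSum_taylorSeries_neg_log hz1')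
    simp only [Complex.reCLM_apply] at h
    have e1 : (fun n : ℕ => ((r : ℂ) ^ n / (n : ℂ)).re) = fun n : ℕ => r ^ n / n := by
      funext n
      rw [show ((r : ℂ) ^ n / (n : ℂ)) = ((r ^ n / n : ℝ) : ℂ) by push_cast; ring,
        Complex.ofReal_re]
    have e2 : (-Complex.log (1 - (r : ℂ))).re = -Real.log (1 - r) := by
      rw [Complex.neg_re, Complex.log_re]
      congr 2
      rw [show (1 : ℂ) - (r : ℂ) = ((1 - r : ℝ) : ℂ) by push_cast; ring, Complex.norm_real, Real.norm_eq_abs,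
        abs_of_pos (by linarith)]
    rw [e1, e2] at h
    exact h
  have h3 := (h2.mul_left 2).sub (h1.mul_left 2)
  -- identify the terms
  have hterm : ∀ n : ℕ, 2 * (r ^ n / n) - 2 * (r ^ n * Real.cos (2 * θ * n) / n)
      = acoef b n * Real.exp (-(2 * τ * n * |x|)) := by
    intro n
    have hexp : Real.exp (-(2 * τ * n * |x|)) = r ^ n := by
      rw [hr, ← Real.exp_nat_mul]
      congr 1
      rw [hy_def]; ring
    rw [hexp]
    unfold acoef
    rw [hθ]
    ring
  -- identify the value
  have habs : ‖1 - z‖ ^ 2 = 1 - 2 * r * Real.cos (2 * θ) + r ^ 2 := by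
    rw [Complex.sq_norm, Complex.normSq_apply]
    have hre : (1 - z).re = 1 - r * Real.cos (2 * θ) := by
      rw [hz, Complex.sub_re, Complex.one_re, Complex.re_ofReal_mul,
        Complex.exp_ofReal_mul_I_re]
    have him : (1 - z).im = -(r * Real.sin (2 * θ)) := by
      rw [hz, Complex.sub_im, Complex.one_im, Complex.im_ofReal_mul,
        Complex.exp_ofReal_mul_I_im]
      ring
    rw [hre, him]
    have := Real.sin_sq_add_cos_sq (2 * θ)
    nlinarith
  have habspos : 0 < 1 - 2 * r * Real.cos (2 * θ) + r ^ 2 := by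
    nlinarith [Real.cos_le_one (2 * θ), Real.neg_one_le_cos (2 * θ)]
  have habs0 : 0 < ‖1 - z‖ := by
    nlinarith [norm_nonneg (1 - z)]
  have hsinh : Real.sinh (τ * x) ^ 2 = (1 - r) ^ 2 / (4 * r) := by
    have heven : Real.sinh (τ * x) ^ 2 = Real.sinh y ^ 2 := by
      rw [hy_def]
      rcases abs_cases x with ⟨h, _⟩ | ⟨h, _⟩
      · rw [h]
      · rw [h]
        rw [show τ * -x = -(τ * x) by ring, Real.sinh_neg]
        ring
    have hE : Real.exp (-y) ^ 2 = r := by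
      rw [hr, ← Real.exp_nat_mul]; congr 1; push_cast; ring
    have hEinv : Real.exp y = (Real.exp (-y))⁻¹ := by
      rw [← Real.exp_neg]; ring_nf
    have hEpos : (0:ℝ) < Real.exp (-y) := Real.exp_pos _
    rw [heven, Real.sinh_eq, hEinv, ← hE]
    field_simp
    ring
  have hvln : vln b τ x = 2 * Real.log ‖1 - z‖ - 2 * Real.log (1 - r) := by
    unfold vln
    have hsin : Real.sin θ ^ 2 = (1 - Real.cos (2 * θ)) / 2 := by
      have h := Real.cos_two_mul' θ
      have h2 := Real.sin_sq_add_cos_sq θ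
      nlinarith
    have harg : 1 + Real.sin (2 * Real.pi * b) ^ 2 / Real.sinh (τ * x) ^ 2
        = (1 - 2 * r * Real.cos (2 * θ) + r ^ 2) / (1 - r) ^ 2 := by
      rw [← hθ, hsinh, hsin]
      have h1r : (1 - r) ≠ 0 := by linarith
      field_simp
      ring
    rw [harg, ← habs]
    rw [Real.log_div (pow_ne_zero 2 habs0.ne') (pow_ne_zero 2 (by linarith : (1 : ℝ) - r ≠ 0)), Real.log_pow, Real.log_pow]
    push_cast
    ring
  rw [hvln]
  have : (fun n : ℕ => acoef b n * Real.exp (-(2 * τ * n * |x|)))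
      = fun n : ℕ => 2 * (r ^ n / n) - 2 * (r ^ n * Real.cos (2 * θ * n) / n) := by
    funext n; rw [hterm n]
  rw [this]
  convert h3 using 1
  · rfl
  · ring



def Hker (κ t s : ℝ) : ℝ := if s ≤ t then Real.exp (-(κ * (t - s))) else 0

lemma Hker_nonneg (κ t s : ℝ) : 0 ≤ Hker κ t s := by
  unfold Hker; split
  · positivity
  · exact le_rfl

lemma measurable_Hker (κ : ℝ) : Measurable (fun p : ℝ × ℝ => Hker κ p.1 p.2) := by
  unfold Hker
  apply Measurable.ite
  · exact measurableSet_le measurable_snd measurable_fst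
  · exact (Real.continuous_exp.comp (continuous_const.mul
      (continuous_fst.sub continuous_snd)).neg).measurable
  · exact measurable_const

lemma integral_exp_Ioi {c : ℝ} (hc : 0 < c) (a : ℝ) :
    ∫ t in Ioi a, Real.exp (-c * t) = Real.exp (-c * a) / c := by
  have hderiv : ∀ t ∈ Ici a, HasDerivAt (fun u : ℝ => -Real.exp (-c * u) / c)
      (Real.exp (-c * t)) t := by
    intro t _
    have h1 : HasDerivAt (fun u : ℝ => -c * u) (-c) t := by
      simpa using (hasDerivAt_id t).const_mul (-c)
    have h2 := (h1.exp.neg).div_const c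
    exact h2.congr_deriv (by rw [div_eq_iff hc.ne']; ring)
  have hint : IntegrableOn (fun t => Real.exp (-c * t)) (Ioi a) :=
    exp_neg_integrableOn_Ioi a hc
  have htend : Tendsto (fun t : ℝ => -Real.exp (-c * t) / c) atTop (𝓝 0) := by
    have h0 : Tendsto (fun t : ℝ => -c * t) atTop atBot :=
      Tendsto.const_mul_atTop_of_neg (by linarith) tendsto_id
    have := (Real.tendsto_exp_atBot.comp h0).neg.div_const c
    simpa using this
  have := integral_Ioi_of_hasDerivAt_of_tendsto' hderiv hint htend
  rw [this]
  ring

lemma kernel_eq {κ : ℝ} (hκ : 0 < κ) (s u : ℝ) :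
    ∫⁻ t : ℝ, ENNReal.ofReal (2 * κ * (Hker κ t s * Hker κ t u))
      = ENNReal.ofReal (Real.exp (-(κ * |s - u|))) := by
  have hfun : (fun t => 2 * κ * (Hker κ t s * Hker κ t u))
      = Set.indicator (Ici (max s u)) (fun t => (2 * κ * Real.exp (κ * s) * Real.exp (κ * u))
          * Real.exp (-(2 * κ) * t)) := by
    funext t
    rw [Set.indicator_apply]
    by_cases h : t ∈ Ici (max s u)
    · rw [if_pos h]
      have hs : s ≤ t := le_trans (le_max_left s u) h
      have hu : u ≤ t := le_trans (le_max_right s u) h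
      unfold Hker
      rw [if_pos hs, if_pos hu, ← Real.exp_add]
      rw [show -(κ * (t - s)) + -(κ * (t - u)) = κ * s + (κ * u + -(2 * κ) * t) by ring]
      rw [Real.exp_add, Real.exp_add]
      ring
    · rw [if_neg h]
      rcases lt_max_iff.mp (notMem_Ici.mp h) with hs | hu
      · unfold Hker
        rw [if_neg (not_le.mpr hs)]
        ring
      · unfold Hker
        rw [if_neg (not_le.mpr hu)]
        ring
  have hgint : Integrable (Set.indicator (Ici (max s u))
      (fun t => (2 * κ * Real.exp (κ * s) * Real.exp (κ * u)) * Real.exp (-(2 * κ) * t))) := by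
    rw [integrable_indicator_iff measurableSet_Ici]
    exact ((Iff.mpr integrableOn_Ici_iff_integrableOn_Ioi
      (exp_neg_integrableOn_Ioi _ (by linarith))).const_mul _)
  have hnonneg : 0 ≤ᵐ[volume] (fun t => 2 * κ * (Hker κ t s * Hker κ t u)) := by
    filter_upwards with t
    have := Hker_nonneg κ t s
    have := Hker_nonneg κ t u
    positivity
  rw [← ofReal_integral_eq_lintegral_ofReal (hfun ▸ hgint) hnonneg]
  congr 1
  rw [hfun, integral_indicator measurableSet_Ici]
  rw [show (∫ t in Ici (max s u), (2 * κ * Real.exp (κ * s) * Real.exp (κ * u))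
      * Real.exp (-(2 * κ) * t)) = (2 * κ * Real.exp (κ * s) * Real.exp (κ * u))
      * ∫ t in Ici (max s u), Real.exp (-(2 * κ) * t) from integral_const_mul _ _]
  rw [integral_Ici_eq_integral_Ioi, integral_exp_Ioi (by linarith : (0:ℝ) < 2 * κ)]
  have habs : -(κ * |s - u|) = κ * s + (κ * u + -(2 * κ) * (max s u)) := by
    rcases le_total s u with h | h
    · rw [abs_of_nonpos (by linarith), max_eq_right h]; ring
    · rw [abs_of_nonneg (by linarith), max_eq_left h]; ring
  rw [habs, Real.exp_add, Real.exp_add]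
  have h2κ : (2 * κ) ≠ 0 := by positivity
  field_simp




lemma amgm (a b : ℝ≥0∞) : a * b + b * a ≤ a * a + b * b := by
  rcases eq_or_ne a ⊤ with rfl | ha
  · have h : (⊤ : ℝ≥0∞) * ⊤ + b * b = ⊤ := by simp
    rw [h]; exact le_top
  · rcases eq_or_ne b ⊤ with rfl | hb
    · have h : a * a + (⊤ : ℝ≥0∞) * ⊤ = ⊤ := by simp
      rw [h]; exact le_top
    · lift a to ℝ≥0 using ha
      lift b to ℝ≥0 using hb
      rw [← ENNReal.coe_mul, ← ENNReal.coe_mul, ← ENNReal.coe_mul, ← ENNReal.coe_mul,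
        ← ENNReal.coe_add, ← ENNReal.coe_add, ENNReal.coe_le_coe, ← NNReal.coe_le_coe]
      push_cast
      nlinarith [sq_nonneg ((a : ℝ) - (b : ℝ))]

lemma measurable_HkerE (κ : ℝ) : Measurable (fun p : ℝ × ℝ => ENNReal.ofReal (Hker κ p.1 p.2)) :=
  ENNReal.measurable_ofReal.comp (measurable_Hker κ)

def lintK (κ : ℝ) (μ ν : Measure ℝ) : ℝ≥0∞ :=
  ∫⁻ q : ℝ × ℝ, ENNReal.ofReal (Real.exp (-(κ * |q.1 - q.2|))) ∂μ.prod ν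

lemma lintK_eq {κ : ℝ} (hκ : 0 < κ) (μ ν : Measure ℝ) [IsFiniteMeasure μ] [IsFiniteMeasure ν] :
    lintK κ μ ν = ∫⁻ t : ℝ, ENNReal.ofReal (2 * κ) *
      ((∫⁻ s, ENNReal.ofReal (Hker κ t s) ∂μ) * (∫⁻ u, ENNReal.ofReal (Hker κ t u) ∂ν)) := by
  unfold lintK
  have hrw : ∀ q : ℝ × ℝ, ENNReal.ofReal (Real.exp (-(κ * |q.1 - q.2|)))
      = ∫⁻ t : ℝ, ENNReal.ofReal (2 * κ * (Hker κ t q.1 * Hker κ t q.2)) :=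
    fun q => (kernel_eq hκ q.1 q.2).symm
  simp_rw [hrw]
  have hmeas : AEMeasurable (Function.uncurry fun (q : ℝ × ℝ) (t : ℝ) =>
      ENNReal.ofReal (2 * κ * (Hker κ t q.1 * Hker κ t q.2))) ((μ.prod ν).prod volume) := by
    apply Measurable.aemeasurable
    apply ENNReal.measurable_ofReal.comp
    apply Measurable.const_mul
    exact ((measurable_Hker κ).comp ((measurable_snd).prodMk (measurable_fst.comp measurable_fst))).mul
      ((measurable_Hker κ).comp ((measurable_snd).prodMk (measurable_snd.comp measurable_fst)))
  rw [lintegral_lintegral_swap hmeas]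
  congr 1
  funext t
  have h1 : ∀ (q : ℝ × ℝ), ENNReal.ofReal (2 * κ * (Hker κ t q.1 * Hker κ t q.2))
      = ENNReal.ofReal (2 * κ) * (ENNReal.ofReal (Hker κ t q.1) * ENNReal.ofReal (Hker κ t q.2)) := by
    intro q
    rw [ENNReal.ofReal_mul (by positivity), ENNReal.ofReal_mul (Hker_nonneg κ t q.1)]
  simp_rw [h1]
  rw [lintegral_const_mul' _ _ ENNReal.ofReal_ne_top]
  congr 1
  have hm : Measurable fun s : ℝ => ENNReal.ofReal (Hker κ t s) :=
    (measurable_HkerE κ).comp (measurable_const.prodMk measurable_id)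
  exact lintegral_prod_mul (f := fun s => ENNReal.ofReal (Hker κ t s))
    (g := fun s => ENNReal.ofReal (Hker κ t s)) hm.aemeasurable hm.aemeasurable

lemma measurable_phi (κ : ℝ) (μ : Measure ℝ) [IsFiniteMeasure μ] :
    Measurable fun t : ℝ => ∫⁻ s, ENNReal.ofReal (Hker κ t s) ∂μ :=
  Measurable.lintegral_prod_right (f := fun t s => ENNReal.ofReal (Hker κ t s))
    (measurable_HkerE κ)

lemma lintK_posdef {κ : ℝ} (hκ : 0 < κ) (P Q : Measure ℝ) [IsFiniteMeasure P]
    [IsFiniteMeasure Q] :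
    lintK κ P Q + lintK κ Q P ≤ lintK κ P P + lintK κ Q Q := by
  rw [lintK_eq hκ P Q, lintK_eq hκ Q P, lintK_eq hκ P P, lintK_eq hκ Q Q]
  set φ := fun t : ℝ => ∫⁻ s, ENNReal.ofReal (Hker κ t s) ∂P with hφ
  set ψ := fun t : ℝ => ∫⁻ s, ENNReal.ofReal (Hker κ t s) ∂Q with hψ
  have hφm : Measurable φ := measurable_phi κ P
  have hψm : Measurable ψ := measurable_phi κ Q
  have hc : ∀ (f : ℝ → ℝ≥0∞), Measurable f →
      Measurable fun t => ENNReal.ofReal (2 * κ) * f t := fun f hf => hf.const_mul _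
  rw [← lintegral_add_left (hc (fun t => φ t * ψ t) (hφm.mul hψm)),
    ← lintegral_add_left (hc (fun t => φ t * φ t) (hφm.mul hφm))]
  apply lintegral_mono
  intro t
  calc ENNReal.ofReal (2*κ) * (φ t * ψ t) + ENNReal.ofReal (2*κ) * (ψ t * φ t)
      = ENNReal.ofReal (2*κ) * (φ t * ψ t + ψ t * φ t) := by rw [mul_add]
    _ ≤ ENNReal.ofReal (2*κ) * (φ t * φ t + ψ t * ψ t) :=
        mul_le_mul_right (amgm (φ t) (ψ t)) _
    _ = ENNReal.ofReal (2*κ) * (φ t * φ t) + ENNReal.ofReal (2*κ) * (ψ t * ψ t) := by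
        rw [mul_add]




lemma measurable_vln (b τ : ℝ) : Measurable (fun x : ℝ => vln b τ x) := by
  unfold vln
  exact Real.measurable_log.comp (measurable_const.add (Measurable.div measurable_const
    (((Real.continuous_sinh.measurable).comp (measurable_const_mul τ)).pow measurable_const)))

lemma vln_nonneg (b τ x : ℝ) : 0 ≤ vln b τ x :=
  Real.log_nonneg (le_add_of_nonneg_right (div_nonneg (sq_nonneg _) (sq_nonneg _)))

lemma vln_zero (b τ : ℝ) : vln b τ 0 = 0 := by
  unfold vln
  rw [mul_zero, Real.sinh_zero]
  norm_num

def Lf (b τ : ℝ) (μ ν : Measure ℝ) : ℝ≥0∞ :=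
  ∫⁻ q : ℝ × ℝ, ENNReal.ofReal (vln b τ (q.1 - q.2)) ∂μ.prod ν

lemma L_series (b τ : ℝ) (hτ : 0 < τ) (μ ν : Measure ℝ) [IsFiniteMeasure μ] [IsFiniteMeasure ν]
    (hnull : (μ.prod ν) {q : ℝ × ℝ | q.1 - q.2 = 0} = 0) :
    Lf b τ μ ν = ∑' n : ℕ, ENNReal.ofReal (acoef b n) * lintK (2 * τ * n) μ ν := by
  unfold Lf
  have hae : ∀ᵐ q : ℝ × ℝ ∂μ.prod ν, ENNReal.ofReal (vln b τ (q.1 - q.2))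
      = ∑' n : ℕ, ENNReal.ofReal (acoef b n * Real.exp (-(2 * τ * n * |q.1 - q.2|))) := by
    rw [ae_iff]
    refine measure_mono_null (fun q hq => ?_) hnull
    simp only [mem_setOf_eq] at hq ⊢
    by_contra hq0
    apply hq
    have hs := hasSum_vln b τ hτ hq0
    rw [← hs.tsum_eq, ENNReal.ofReal_tsum_of_nonneg
      (fun n => mul_nonneg (acoef_nonneg b n) (Real.exp_pos _).le) hs.summable]
  rw [lintegral_congr_ae hae]
  rw [lintegral_tsum (f := fun (n : ℕ) (q : ℝ × ℝ) =>
      ENNReal.ofReal (acoef b n * Real.exp (-(2 * τ * n * |q.1 - q.2|))))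
    (fun n => ((Real.measurable_exp.comp
      (((measurable_fst.sub measurable_snd).abs.const_mul (2 * τ * (n:ℝ))).neg)).const_mul
      (acoef b n)).ennreal_ofReal.aemeasurable)]
  congr 1
  funext n
  unfold lintK
  simp_rw [ENNReal.ofReal_mul (acoef_nonneg b n)]
  rw [lintegral_const_mul' _ _ ENNReal.ofReal_ne_top]

lemma term_ineq (b τ : ℝ) (hτ : 0 < τ) (P Q : Measure ℝ) [IsFiniteMeasure P] [IsFiniteMeasure Q]
    (n : ℕ) :
    ENNReal.ofReal (acoef b n) * lintK (2 * τ * n) P Q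
      + ENNReal.ofReal (acoef b n) * lintK (2 * τ * n) Q P
    ≤ ENNReal.ofReal (acoef b n) * lintK (2 * τ * n) P P
      + ENNReal.ofReal (acoef b n) * lintK (2 * τ * n) Q Q := by
  rcases Nat.eq_zero_or_pos n with rfl | hn
  · simp [acoef]
  · have hκ : (0:ℝ) < 2 * τ * n := by
      have : (0:ℝ) < n := by exact_mod_cast hn
      positivity
    rw [← mul_add, ← mul_add]
    exact mul_le_mul_right (lintK_posdef hκ P Q) _

lemma prod_mono_aux (μ₁ μ₂ ν₁ ν₂ : Measure ℝ) [SFinite ν₁] [SFinite ν₂] (h1 : μ₁ ≤ μ₂)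
    (h2 : ν₁ ≤ ν₂) : μ₁.prod ν₁ ≤ μ₂.prod ν₂ := by
  rw [Measure.le_iff]
  intro s hs
  rw [Measure.prod_apply hs, Measure.prod_apply hs]
  exact le_trans (lintegral_mono fun x => Measure.le_iff'.mp h2 _) (lintegral_mono' h1 le_rfl)


end Stmt9

open Stmt9

/-- E_N^{(−)}[σ] ≥ 0 for every finite signed Borel measure σ with
∬ ln(1 + sin²(2π𝔟)/sinh²(τ_N(s−u))) d|σ|(s)d|σ|(u) < ∞ (the integrand being +∞ on the
diagonal). -/
theorem statement9 (b : ℝ) (hb1 : 0 < b) (hb2 : b < 1 / 2) (N : ℕ) (hN : 2 ≤ N)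
    (σ : SignedMeasure ℝ)
    (hint : ∫⁻ q : ℝ × ℝ,
        (if q.1 - q.2 = 0 then (⊤ : ℝ≥0∞)
          else ENNReal.ofReal (vln b (Real.log N) (q.1 - q.2)))
        ∂(σ.totalVariation.prod σ.totalVariation) < ⊤) :
    0 ≤ ENminus b N σ := by
  set τ := Real.log N with hτdef
  have hτ : 0 < τ := Real.log_pos (by exact_mod_cast Nat.lt_of_lt_of_le Nat.one_lt_two hN)
  set P := σ.toJordanDecomposition.posPart with hPdef
  set Q := σ.toJordanDecomposition.negPart with hQdef
  have htv : σ.totalVariation = P + Q := rfl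
  haveI : IsFiniteMeasure σ.totalVariation := by
    rw [htv]; infer_instance
  have hPle : P ≤ σ.totalVariation := htv ▸ Measure.le_add_right le_rfl
  have hQle : Q ≤ σ.totalVariation := htv ▸ Measure.le_add_left le_rfl
  -- the diagonal
  have hDmeas : MeasurableSet {q : ℝ × ℝ | q.1 - q.2 = 0} :=
    (measurable_fst.sub measurable_snd) (measurableSet_singleton 0)
  have hDnull : (σ.totalVariation.prod σ.totalVariation) {q : ℝ × ℝ | q.1 - q.2 = 0} = 0 := by
    by_contra h
    have h1 : (⊤ : ℝ≥0∞) * (σ.totalVariation.prod σ.totalVariation) {q : ℝ × ℝ | q.1 - q.2 = 0}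
        = ⊤ := ENNReal.top_mul h
    have h2 : ∫⁻ q : ℝ × ℝ in {q : ℝ × ℝ | q.1 - q.2 = 0}, (⊤ : ℝ≥0∞)
        ∂(σ.totalVariation.prod σ.totalVariation)
        ≤ ∫⁻ q : ℝ × ℝ, (if q.1 - q.2 = 0 then (⊤ : ℝ≥0∞)
          else ENNReal.ofReal (vln b τ (q.1 - q.2)))
        ∂(σ.totalVariation.prod σ.totalVariation) := by
      rw [show (∫⁻ q : ℝ × ℝ in {q : ℝ × ℝ | q.1 - q.2 = 0}, (⊤ : ℝ≥0∞)
          ∂(σ.totalVariation.prod σ.totalVariation))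
          = ∫⁻ q : ℝ × ℝ in {q : ℝ × ℝ | q.1 - q.2 = 0},
            (if q.1 - q.2 = 0 then (⊤ : ℝ≥0∞)
              else ENNReal.ofReal (vln b τ (q.1 - q.2)))
          ∂(σ.totalVariation.prod σ.totalVariation) from
        setLIntegral_congr_fun hDmeas (fun q hq => by
          simp only [mem_setOf_eq] at hq; rw [if_pos hq])]
      exact setLIntegral_le_lintegral _ _
    rw [setLIntegral_const, h1] at h2
    exact absurd (lt_of_le_of_lt h2 hint) (lt_irrefl ⊤)
  have hnull : ∀ (μ ν : Measure ℝ), μ ≤ σ.totalVariation → ν ≤ σ.totalVariation →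
      ∀ [SFinite ν], (μ.prod ν) {q : ℝ × ℝ | q.1 - q.2 = 0} = 0 := by
    intro μ ν hμ hν _
    exact le_antisymm (le_trans (Measure.le_iff'.mp
      (prod_mono_aux μ σ.totalVariation ν σ.totalVariation hμ hν) _) hDnull.le) bot_le
  -- finiteness
  have hfin : ∀ (μ ν : Measure ℝ), μ ≤ σ.totalVariation → ν ≤ σ.totalVariation →
      ∀ [SFinite ν], Lf b τ μ ν ≠ ⊤ := by
    intro μ ν hμ hν _
    have hle1 : Lf b τ μ ν ≤ Lf b τ σ.totalVariation σ.totalVariation :=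
      lintegral_mono' (prod_mono_aux μ σ.totalVariation ν σ.totalVariation hμ hν) le_rfl
    have hle2 : Lf b τ σ.totalVariation σ.totalVariation
        ≤ ∫⁻ q : ℝ × ℝ, (if q.1 - q.2 = 0 then (⊤ : ℝ≥0∞)
          else ENNReal.ofReal (vln b τ (q.1 - q.2)))
        ∂(σ.totalVariation.prod σ.totalVariation) := by
      apply lintegral_mono
      intro q
      dsimp only
      by_cases h : q.1 - q.2 = 0
      · rw [if_pos h]; exact le_top
      · rw [if_neg h]
    exact (lt_of_le_of_lt (hle1.trans hle2) hint).ne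
  -- the key inequality
  have hkey : Lf b τ P Q + Lf b τ Q P ≤ Lf b τ P P + Lf b τ Q Q := by
    rw [L_series b τ hτ P Q (hnull P Q hPle hQle), L_series b τ hτ Q P (hnull Q P hQle hPle),
      L_series b τ hτ P P (hnull P P hPle hPle), L_series b τ hτ Q Q (hnull Q Q hQle hQle)]
    rw [← ENNReal.tsum_add, ← ENNReal.tsum_add]
    exact ENNReal.tsum_le_tsum fun n => term_ineq b τ hτ P Q n
  -- conversion to real integrals
  have hconv : ∀ (μ ν : Measure ℝ), ∀ [SFinite ν],
      (∫ q : ℝ × ℝ, vln b τ (q.1 - q.2) ∂μ.prod ν) = (Lf b τ μ ν).toReal := by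
    intro μ ν _
    rw [integral_eq_lintegral_of_nonneg_ae (f := fun q : ℝ × ℝ => vln b τ (q.1 - q.2)) (Eventually.of_forall fun q => vln_nonneg b τ _)
      (((measurable_vln b τ).comp (measurable_fst.sub measurable_snd)).aestronglyMeasurable)]
    rfl
  have hBC : (Lf b τ P Q).toReal + (Lf b τ Q P).toReal
      ≤ (Lf b τ P P).toReal + (Lf b τ Q Q).toReal := by
    rw [← ENNReal.toReal_add (hfin P Q hPle hQle) (hfin Q P hQle hPle),
      ← ENNReal.toReal_add (hfin P P hPle hPle) (hfin Q Q hQle hQle)]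
    exact ENNReal.toReal_mono
      (ENNReal.add_ne_top.mpr ⟨hfin P P hPle hPle, hfin Q Q hQle hQle⟩) hkey
  unfold ENminus jordanDbl
  have e1 := hconv P P
  have e2 := hconv P Q
  have e3 := hconv Q P
  have e4 := hconv Q Q
  beta_reduce
  simp only [← hτdef]
  rw [e1, e2, e3, e4]
  linarith

end
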